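/- Let σ' < 0 and τ ∈ ℕ, 1 < p < ∞. Suppose (b_R)_{R} are nonnegative numbers indexed by a countable family, organized by levels j ∈ ℤ, and (a_Q) nonnegative numbers at levels k, with a 'chain' relation such that each Q at level k determines at most 2^τ elements R ∈ 𝒞(Q) at each level j ≤ k+τ, and for each R at level j the shadow satisfies ∑_{k≥j−τ} ∑_{Q ∈ 𝒮(R), level k} 2^{(j−k)(n−sp)}(τ+1+k−j)^p ≤ σ. Then ∑_Q 2^{−k_Q(n−sp)} (∑_{R∈𝒞(Q)} b_R)^p ≤ C(σ,τ,p) ∑_R 2^{−j_R(n−sp)} b_R^p. -/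

import Mathlib

open scoped ENNReal

noncomputable section

theorem stmt18 (n : ℕ) (s p : ℝ) (τ : ℕ) (σ : ℝ) (hp : 1 < p) (hσ : 0 < σ)
    (hns : 0 < (n : ℝ) - s * p) :
    ∃ C : ℝ, 0 < C ∧
      ∀ (ι ρ : Type) (lvQ : ι → ℤ) (lvR : ρ → ℤ) (chain : ι → Finset ρ) (b : ρ → ℝ≥0∞),
        -- each element of the chain of `Q` lives at level at most `lvQ Q + τ`
        (∀ Q : ι, ∀ R ∈ chain Q, lvR R ≤ lvQ Q + τ) →
        -- at most `2^τ` elements of each chain per level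
        (∀ (Q : ι) (j : ℤ), ((chain Q).filter fun R => lvR R = j).card ≤ 2 ^ τ) →
        -- shadow summability condition
        (∀ R : ρ,
          (∑' Q : {Q : ι // R ∈ chain Q},
            ENNReal.ofReal ((2 : ℝ) ^ (((lvR R : ℝ) - (lvQ Q.1 : ℝ)) * ((n : ℝ) - s * p)) *
              ((τ : ℝ) + 1 + (lvQ Q.1 : ℝ) - (lvR R : ℝ)) ^ p)) ≤ ENNReal.ofReal σ) →
        (∑' Q : ι, ENNReal.ofReal ((2 : ℝ) ^ (-(lvQ Q : ℝ) * ((n : ℝ) - s * p))) *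
            (∑ R ∈ chain Q, b R) ^ p)
          ≤ ENNReal.ofReal C *
            ∑' R : ρ, ENNReal.ofReal ((2 : ℝ) ^ (-(lvR R : ℝ) * ((n : ℝ) - s * p))) * b R ^ p := by
  classical
  set A : ℝ := (n : ℝ) - s * p with hAdef
  have hpq : p.HolderConjugate (p / (p - 1)) := Real.HolderConjugate.conjExponent hp
  set q : ℝ := p / (p - 1) with hqdef
  have hq1 : 1 < q := hpq.symm.lt
  have hp0 : (0 : ℝ) < p := hpq.pos
  have hp1 : (0:ℝ) ≤ p - 1 := by linarith
  -- the zeta-type series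
  have hsum : Summable (fun m : ℕ => ((m : ℝ) + 1) ^ (-q)) := by
    have h := Real.summable_nat_rpow (p := -q) |>.mpr (by linarith)
    have h2 := (summable_nat_add_iff (f := fun n : ℕ => (n : ℝ) ^ (-q)) 1).mpr h
    simpa using h2
  set Zr : ℝ := ∑' m : ℕ, ((m : ℝ) + 1) ^ (-q) with hZrdef
  have hZr0 : 0 ≤ Zr := tsum_nonneg fun m => Real.rpow_nonneg (by positivity) _
  have hZsum : (∑' m : ℕ, ENNReal.ofReal (((m : ℝ) + 1) ^ (-q))) = ENNReal.ofReal Zr :=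
    (ENNReal.ofReal_tsum_of_nonneg (fun m => Real.rpow_nonneg (by positivity) _) hsum).symm
  set Cb : ℝ := 2 ^ τ * (Zr + 1) with hCbdef
  have hCb0 : 0 < Cb := by positivity
  refine ⟨Cb ^ (p - 1) * σ, by positivity, ?_⟩
  intro ι ρ lvQ lvR chain b h1 h2 h3
  set W : ι → ρ → ℝ≥0∞ := fun Q R =>
    ENNReal.ofReal ((τ : ℝ) + 1 + (lvQ Q : ℝ) - (lvR R : ℝ)) with hWdef
  set u : ι → ℝ≥0∞ := fun Q => ENNReal.ofReal ((2 : ℝ) ^ (-(lvQ Q : ℝ) * A)) with hudef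
  set G : ι → ℝ≥0∞ := fun Q => ∑ R ∈ chain Q, (W Q R) ^ p * (b R) ^ p with hGdef
  set K : ℝ≥0∞ := (ENNReal.ofReal Cb) ^ (p - 1) with hKdef
  have hbase : ∀ Q R, R ∈ chain Q → 1 ≤ (τ : ℝ) + 1 + (lvQ Q : ℝ) - (lvR R : ℝ) := by
    intro Q R hR
    have h := h1 Q R hR
    have h' : (lvR R : ℝ) ≤ (lvQ Q : ℝ) + (τ : ℝ) := by exact_mod_cast h
    linarith
  -- Step C : bound on the dual sum
  have hT : ∀ Q : ι, ∑ R ∈ chain Q, ((W Q R)⁻¹) ^ q ≤ ENNReal.ofReal Cb := by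
    intro Q
    set φ : ρ → ℕ := fun R => ((τ : ℤ) + lvQ Q - lvR R).toNat with hφdef
    have hterm : ∀ R ∈ chain Q,
        ((W Q R)⁻¹) ^ q = ENNReal.ofReal (((φ R : ℝ) + 1) ^ (-q)) := by
      intro R hR
      have hx := hbase Q R hR
      have hx0 : (0 : ℝ) < (τ : ℝ) + 1 + (lvQ Q : ℝ) - (lvR R : ℝ) := by linarith
      have hnn : (0 : ℤ) ≤ (τ : ℤ) + lvQ Q - lvR R := by
        have := h1 Q R hR; omega
      have hcast : (τ : ℝ) + 1 + (lvQ Q : ℝ) - (lvR R : ℝ) = (φ R : ℝ) + 1 := by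
        have h' : ((((τ : ℤ) + lvQ Q - lvR R).toNat : ℤ) : ℝ)
            = (τ : ℝ) + (lvQ Q : ℝ) - (lvR R : ℝ) := by
          rw [Int.toNat_of_nonneg hnn]; push_cast; ring
        rw [hφdef]; push_cast at h' ⊢; linarith
      rw [hWdef]
      simp only
      rw [ENNReal.inv_rpow, ← ENNReal.rpow_neg_one, ← ENNReal.rpow_mul,
        ENNReal.ofReal_rpow_of_pos hx0, hcast]
      ring_nf
    rw [Finset.sum_congr rfl hterm]
    have hcomp := Finset.sum_comp (s := chain Q)
      (f := fun m : ℕ => ENNReal.ofReal (((m : ℝ) + 1) ^ (-q))) (g := φ)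
    rw [hcomp]
    have hfib : ∀ m : ℕ, ((chain Q).filter fun R => φ R = m).card ≤ 2 ^ τ := by
      intro m
      refine le_trans (Finset.card_le_card ?_) (h2 Q ((τ : ℤ) + lvQ Q - m))
      intro R hR
      simp only [Finset.mem_filter] at hR ⊢
      obtain ⟨hRm, hφR⟩ := hR
      have hnn : (0 : ℤ) ≤ (τ : ℤ) + lvQ Q - lvR R := by
        have := h1 Q R hRm; omega
      refine ⟨hRm, ?_⟩
      have : ((τ : ℤ) + lvQ Q - lvR R) = (m : ℤ) := by
        rw [← Int.toNat_of_nonneg hnn, hφdef] at *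
        exact_mod_cast congrArg (fun k : ℕ => (k : ℤ)) hφR
      omega
    calc ∑ m ∈ (chain Q).image φ,
          ((chain Q).filter fun R => φ R = m).card • ENNReal.ofReal (((m : ℝ) + 1) ^ (-q))
        ≤ ∑ m ∈ (chain Q).image φ, (2 ^ τ : ℝ≥0∞) * ENNReal.ofReal (((m : ℝ) + 1) ^ (-q)) := by
          refine Finset.sum_le_sum fun m _ => ?_
          rw [nsmul_eq_mul]
          exact mul_le_mul_left (by exact_mod_cast Nat.cast_le.mpr (hfib m)) _
      _ = (2 ^ τ : ℝ≥0∞) * ∑ m ∈ (chain Q).image φ, ENNReal.ofReal (((m : ℝ) + 1) ^ (-q)) := by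
          rw [Finset.mul_sum]
      _ ≤ (2 ^ τ : ℝ≥0∞) * ∑' m : ℕ, ENNReal.ofReal (((m : ℝ) + 1) ^ (-q)) :=
          mul_le_mul_right (ENNReal.sum_le_tsum _) _
      _ = (2 ^ τ : ℝ≥0∞) * ENNReal.ofReal Zr := by rw [hZsum]
      _ ≤ (2 ^ τ : ℝ≥0∞) * ENNReal.ofReal (Zr + 1) :=
          mul_le_mul_right (ENNReal.ofReal_le_ofReal (by linarith)) _
      _ = ENNReal.ofReal Cb := by
          rw [hCbdef, ENNReal.ofReal_mul (by positivity)]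
          congr 1
          rw [ENNReal.ofReal_pow (by norm_num)]
          norm_num
  -- Step B : per-Q Hölder
  have hQbound : ∀ Q : ι, (∑ R ∈ chain Q, b R) ^ p ≤ K * G Q := by
    intro Q
    have hrw : ∑ R ∈ chain Q, b R = ∑ R ∈ chain Q, (W Q R)⁻¹ * (W Q R * b R) := by
      refine Finset.sum_congr rfl fun R hR => ?_
      have hx := hbase Q R hR
      rw [← mul_assoc, ENNReal.inv_mul_cancel, one_mul]
      · simp only [hWdef, ne_eq, ENNReal.ofReal_eq_zero, not_le]; linarith
      · rw [hWdef]; exact ENNReal.ofReal_ne_top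
    have hH := ENNReal.inner_le_Lp_mul_Lq (chain Q) (fun R => (W Q R)⁻¹)
      (fun R => W Q R * b R) hpq.symm
    have hGeq : ∑ R ∈ chain Q, (W Q R * b R) ^ p = G Q := by
      rw [hGdef]
      exact Finset.sum_congr rfl fun R _ => ENNReal.mul_rpow_of_nonneg _ _ hp0.le
    have hqp : 1 / q * p = p - 1 := by
      rw [hqdef]
      field_simp
    have hpp : 1 / p * p = 1 := one_div_mul_cancel hp0.ne'
    calc (∑ R ∈ chain Q, b R) ^ p
        = (∑ R ∈ chain Q, (W Q R)⁻¹ * (W Q R * b R)) ^ p := by rw [hrw]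
      _ ≤ ((∑ R ∈ chain Q, ((W Q R)⁻¹) ^ q) ^ (1 / q) *
            (∑ R ∈ chain Q, (W Q R * b R) ^ p) ^ (1 / p)) ^ p :=
          ENNReal.rpow_le_rpow hH hp0.le
      _ = (∑ R ∈ chain Q, ((W Q R)⁻¹) ^ q) ^ (p - 1) * G Q := by
          rw [ENNReal.mul_rpow_of_nonneg _ _ hp0.le, ← ENNReal.rpow_mul,
            ← ENNReal.rpow_mul, hqp, hpp, ENNReal.rpow_one, hGeq]
      _ ≤ K * G Q := by
          rw [hKdef]
          exact mul_le_mul_left (ENNReal.rpow_le_rpow (hT Q) hp1) _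
  -- Step E : swap sums and apply the shadow hypothesis
  have hmid : (∑' Q : ι, u Q * G Q) ≤ ENNReal.ofReal σ *
      ∑' R : ρ, ENNReal.ofReal ((2 : ℝ) ^ (-(lvR R : ℝ) * A)) * b R ^ p := by
    have hQR : ∀ Q : ι, u Q * G Q =
        ∑' R : ρ, (if R ∈ chain Q then u Q * (W Q R) ^ p * (b R) ^ p else 0) := by
      intro Q
      rw [tsum_eq_sum (s := chain Q) (fun R hR => if_neg hR), hGdef, Finset.mul_sum]
      exact Finset.sum_congr rfl fun R hR => by rw [if_pos hR, mul_assoc]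
    have hperR : ∀ R : ρ,
        (∑' Q : ι, (if R ∈ chain Q then u Q * (W Q R) ^ p * (b R) ^ p else 0))
          ≤ ENNReal.ofReal σ * (ENNReal.ofReal ((2 : ℝ) ^ (-(lvR R : ℝ) * A)) * b R ^ p) := by
      intro R
      have hsub : (∑' Q : ι, (if R ∈ chain Q then u Q * (W Q R) ^ p * (b R) ^ p else 0))
          = ∑' Q : {Q : ι // R ∈ chain Q}, u Q.1 * (W Q.1 R) ^ p * (b R) ^ p := by
        have h' := tsum_subtype {Q : ι | R ∈ chain Q} (fun Q => u Q * (W Q R) ^ p * (b R) ^ p)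
        exact (tsum_congr fun Q => by
          by_cases h : R ∈ chain Q <;> simp [Set.indicator_apply, h]).trans h'.symm
      rw [hsub]
      have hterm : ∀ Q : {Q : ι // R ∈ chain Q},
          u Q.1 * (W Q.1 R) ^ p * (b R) ^ p =
          (ENNReal.ofReal ((2 : ℝ) ^ (-(lvR R : ℝ) * A)) * b R ^ p) *
            ENNReal.ofReal ((2 : ℝ) ^ (((lvR R : ℝ) - (lvQ Q.1 : ℝ)) * A) *
              ((τ : ℝ) + 1 + (lvQ Q.1 : ℝ) - (lvR R : ℝ)) ^ p) := by
        rintro ⟨Q, hQR'⟩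
        have hx := hbase Q R hQR'
        have hx0 : (0 : ℝ) < (τ : ℝ) + 1 + (lvQ Q : ℝ) - (lvR R : ℝ) := by linarith
        have hreal : (2 : ℝ) ^ (-(lvQ Q : ℝ) * A) *
            ((τ : ℝ) + 1 + (lvQ Q : ℝ) - (lvR R : ℝ)) ^ p
            = (2 : ℝ) ^ (-(lvR R : ℝ) * A) *
              ((2 : ℝ) ^ (((lvR R : ℝ) - (lvQ Q : ℝ)) * A) *
                ((τ : ℝ) + 1 + (lvQ Q : ℝ) - (lvR R : ℝ)) ^ p) := by
          rw [← mul_assoc, ← Real.rpow_add (by norm_num)]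
          ring_nf
        rw [hWdef, hudef]
        simp only
        rw [ENNReal.ofReal_rpow_of_pos hx0,
          ← ENNReal.ofReal_mul (Real.rpow_nonneg (by norm_num) _), hreal,
          ENNReal.ofReal_mul (Real.rpow_nonneg (by norm_num) _)]
        ring
      calc (∑' Q : {Q : ι // R ∈ chain Q}, u Q.1 * (W Q.1 R) ^ p * (b R) ^ p)
          = (ENNReal.ofReal ((2 : ℝ) ^ (-(lvR R : ℝ) * A)) * b R ^ p) *
              ∑' Q : {Q : ι // R ∈ chain Q},
                ENNReal.ofReal ((2 : ℝ) ^ (((lvR R : ℝ) - (lvQ Q.1 : ℝ)) * A) *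
                  ((τ : ℝ) + 1 + (lvQ Q.1 : ℝ) - (lvR R : ℝ)) ^ p) := by
            rw [← ENNReal.tsum_mul_left]
            exact tsum_congr hterm
        _ ≤ (ENNReal.ofReal ((2 : ℝ) ^ (-(lvR R : ℝ) * A)) * b R ^ p) * ENNReal.ofReal σ :=
            mul_le_mul_right (h3 R) _
        _ = ENNReal.ofReal σ * (ENNReal.ofReal ((2 : ℝ) ^ (-(lvR R : ℝ) * A)) * b R ^ p) := by
            ring
    calc (∑' Q : ι, u Q * G Q)
        = ∑' Q : ι, ∑' R : ρ, (if R ∈ chain Q then u Q * (W Q R) ^ p * (b R) ^ p else 0) :=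
          tsum_congr hQR
      _ = ∑' R : ρ, ∑' Q : ι, (if R ∈ chain Q then u Q * (W Q R) ^ p * (b R) ^ p else 0) :=
          ENNReal.tsum_comm
      _ ≤ ∑' R : ρ, ENNReal.ofReal σ *
            (ENNReal.ofReal ((2 : ℝ) ^ (-(lvR R : ℝ) * A)) * b R ^ p) :=
          ENNReal.tsum_le_tsum hperR
      _ = ENNReal.ofReal σ *
            ∑' R : ρ, ENNReal.ofReal ((2 : ℝ) ^ (-(lvR R : ℝ) * A)) * b R ^ p :=
          ENNReal.tsum_mul_left
  -- put everything together
  calc (∑' Q : ι, u Q * (∑ R ∈ chain Q, b R) ^ p)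
      ≤ ∑' Q : ι, K * (u Q * G Q) := by
        refine ENNReal.tsum_le_tsum fun Q => ?_
        calc u Q * (∑ R ∈ chain Q, b R) ^ p ≤ u Q * (K * G Q) :=
              mul_le_mul_right (hQbound Q) _
          _ = K * (u Q * G Q) := by ring
    _ = K * ∑' Q : ι, u Q * G Q := ENNReal.tsum_mul_left
    _ ≤ K * (ENNReal.ofReal σ *
          ∑' R : ρ, ENNReal.ofReal ((2 : ℝ) ^ (-(lvR R : ℝ) * A)) * b R ^ p) :=
        mul_le_mul_right hmid _
    _ = ENNReal.ofReal (Cb ^ (p - 1) * σ) *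
          ∑' R : ρ, ENNReal.ofReal ((2 : ℝ) ^ (-(lvR R : ℝ) * A)) * b R ^ p := by
        rw [hKdef, ENNReal.ofReal_rpow_of_pos hCb0, ← mul_assoc,
          ← ENNReal.ofReal_mul (Real.rpow_nonneg hCb0.le _)]
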